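/- Let r ≥ 1 be an integer, 0 < q < 1 and 0 < t < 1. Define V(x) = −((1−t)/t)·log(x + q^{−1}) + ((r+t)/t)·log(x^{1/r} + q^{1/r}) for x ≥ 0, where x^{1/r} denotes the nonnegative real r-th root. Then V(0) = min_{x ≥ 0} V(x), i.e. V(x) ≥ V(0) for every x ≥ 0. -/

import Mathlib

lemma key_log_ineq (r : ℕ) (hr : 1 ≤ r) (a b q u : ℝ)
    (hu : 0 ≤ u) (hq0 : 0 < q) (hq1 : q ≤ 1) (ha : 0 ≤ a) (hab : a * r ≤ b) :
    a * Real.log (1 + q ^ 2 * u ^ r) ≤ b * Real.log (1 + u) := by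
  have h1 : (1 : ℝ) + q ^ 2 * u ^ r ≤ (1 + u) ^ r := by
    have hq2 : q ^ 2 ≤ 1 := by nlinarith
    have h2 : q ^ 2 * u ^ r ≤ u ^ r :=
      mul_le_of_le_one_left (pow_nonneg hu r) hq2
    have h3 : (1:ℝ) + u ^ r ≤ (1 + u) ^ r := by
      simpa using pow_add_pow_le (by norm_num : (0:ℝ) ≤ 1) hu (by omega : r ≠ 0)
    linarith
  have hpos : (0:ℝ) < 1 + q ^ 2 * u ^ r := by positivity
  have hlog1 : Real.log (1 + q ^ 2 * u ^ r) ≤ r * Real.log (1 + u) := by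
    calc Real.log (1 + q ^ 2 * u ^ r) ≤ Real.log ((1 + u) ^ r) :=
          Real.log_le_log hpos h1
      _ = (r:ℝ) * Real.log (1 + u) := by rw [Real.log_pow]
  have hlognn : 0 ≤ Real.log (1 + u) := Real.log_nonneg (by linarith)
  calc a * Real.log (1 + q ^ 2 * u ^ r) ≤ a * ((r:ℝ) * Real.log (1 + u)) := by
        exact mul_le_mul_of_nonneg_left hlog1 ha
    _ = (a * (r:ℝ)) * Real.log (1 + u) := by ring
    _ ≤ b * Real.log (1 + u) := mul_le_mul_of_nonneg_right hab hlognn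

theorem V_attains_min_at_zero
    (r : ℕ) (hr : 1 ≤ r) (q t : ℝ) (hq0 : 0 < q) (hq1 : q < 1)
    (ht0 : 0 < t) (ht1 : t < 1)
    (V : ℝ → ℝ)
    (hV : ∀ x : ℝ, 0 ≤ x →
      V x = -((1 - t) / t) * Real.log (x + q⁻¹)
        + (((r : ℝ) + t) / t) * Real.log (x ^ ((r : ℝ)⁻¹) + q ^ ((r : ℝ)⁻¹))) :
    ∀ x : ℝ, 0 ≤ x → V 0 ≤ V x := by
  intro x hx
  have hrne : r ≠ 0 := by omega
  have hrinv : ((r:ℝ))⁻¹ ≠ 0 := by positivity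
  set a : ℝ := (1 - t) / t with ha_def
  set b : ℝ := ((r : ℝ) + t) / t with hb_def
  set s : ℝ := q ^ ((r : ℝ)⁻¹) with hs_def
  set y : ℝ := x ^ ((r : ℝ)⁻¹) with hy_def
  have hs : 0 < s := Real.rpow_pos_of_pos hq0 _
  have hy : 0 ≤ y := Real.rpow_nonneg hx _
  have hsr : s ^ r = q := Real.rpow_inv_natCast_pow hq0.le hrne
  have hyr : y ^ r = x := Real.rpow_inv_natCast_pow hx hrne
  have hzero : (0:ℝ) ^ ((r:ℝ)⁻¹) = 0 := Real.zero_rpow hrinv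
  rw [hV x hx, hV 0 le_rfl, hzero, zero_add, zero_add]
  -- reduce to: a * (log (x+q⁻¹) - log q⁻¹) ≤ b * (log (y+s) - log s)
  have ha0 : 0 ≤ a := by
    apply div_nonneg <;> linarith
  have hab : a * r ≤ b := by
    rw [ha_def, hb_def, div_mul_eq_mul_div, div_le_div_iff₀ ht0 ht0]
    have h1 : (1:ℝ) ≤ (r:ℝ) := by exact_mod_cast hr
    nlinarith [mul_nonneg (mul_nonneg ht0.le ht0.le) (by positivity : (0:ℝ) ≤ (r:ℝ))]
  set u : ℝ := y / s with hu_def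
  have hu : 0 ≤ u := div_nonneg hy hs.le
  have key := key_log_ineq r hr a b q u hu hq0 hq1.le ha0 hab
  have e1 : Real.log (x + q⁻¹) - Real.log q⁻¹ = Real.log (1 + q ^ 2 * u ^ r) := by
    rw [← Real.log_div (by positivity) (by positivity)]
    congr 1
    have : (x + q⁻¹) / q⁻¹ = q * x + 1 := by field_simp
    rw [this, ← hyr, hu_def, div_pow]
    field_simp [hsr]
    rw [hsr]; ring
  have e2 : Real.log (y + s) - Real.log s = Real.log (1 + u) := by
    rw [← Real.log_div (by positivity) (by positivity)]
    congr 1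
    field_simp [hu_def]
    rw [hu_def, mul_comm s, add_mul, one_mul, div_mul_cancel₀ y hs.ne']; ring
  have hyg : x ^ ((r:ℝ)⁻¹) = y := rfl
  rw [hyg]
  have hmain : a * (Real.log (x + q⁻¹) - Real.log q⁻¹) ≤ b * (Real.log (y + s) - Real.log s) := by
    rw [e1, e2]; exact key
  nlinarith [hmain]
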